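/- If 0 < r ≤ 2/√ε then ψ₁(r) ≤ √(2/(c-ε))·e²·r, and if r > 2/√ε then ψ₁(r) ≤ 2√2·e²/√(ε(c-ε)) + 2 e^{ε r²/2}/(ε(c-ε) r²). -/

import Mathlib

open MeasureTheory Real

/-- `ψ₁ c ε r = ∫₀^r e^{c s²/2} (∫_s^∞ e^{-(c-ε) u²/2} du) ds`. -/
noncomputable def psi1 (c ε r : ℝ) : ℝ :=
  ∫ s in (0:ℝ)..r, Real.exp (c * s ^ 2 / 2) * ∫ u in Set.Ioi s, Real.exp (-(c - ε) * u ^ 2 / 2)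

open Set Filter

noncomputable def Gt (k s : ℝ) : ℝ := ∫ u in Set.Ioi s, Real.exp (-k * u ^ 2 / 2)

lemma int_gauss {k : ℝ} (hk : 0 < k) : Integrable (fun u : ℝ => Real.exp (-k * u ^ 2 / 2)) := by
  have h := integrable_exp_neg_mul_sq (show (0:ℝ) < k / 2 by positivity)
  refine h.congr ?_
  filter_upwards with u
  congr 1; ring

lemma Gt_nonneg (k s : ℝ) : 0 ≤ Gt k s :=
  integral_nonneg fun u => (Real.exp_pos _).le

lemma Gt_anti {k : ℝ} (hk : 0 < k) : Antitone (Gt k) := by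
  intro s t hst
  exact setIntegral_mono_set (int_gauss hk).integrableOn
    (Filter.Eventually.of_forall fun u => (Real.exp_pos _).le)
    ((Set.Ioi_subset_Ioi hst).eventuallyLE)

lemma Gt_meas {k : ℝ} (hk : 0 < k) : Measurable (Gt k) := (Gt_anti hk).measurable

lemma L2 {k : ℝ} (hk : 0 < k) {s : ℝ} (hs : 0 ≤ s) :
    Real.exp (k * s ^ 2 / 2) * Gt k s ≤ Real.sqrt (2 / k) := by
  have key : Real.exp (k * s ^ 2 / 2) * Gt k s
      = ∫ u in Set.Ioi s, Real.exp (k * s ^ 2 / 2) * Real.exp (-k * u ^ 2 / 2) :=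
    (integral_const_mul _ _).symm
  -- integrability of shifted gaussian on Ioi s
  have hshift : Integrable (fun u : ℝ => Real.exp (-(k / 2) * (u - s) ^ 2)) := by
    have h := integrable_exp_neg_mul_sq (show (0:ℝ) < k / 2 by positivity)
    exact h.comp_sub_right s
  have mono : (∫ u in Set.Ioi s, Real.exp (k * s ^ 2 / 2) * Real.exp (-k * u ^ 2 / 2))
      ≤ ∫ u in Set.Ioi s, Real.exp (-(k / 2) * (u - s) ^ 2) := by
    refine setIntegral_mono_on ((int_gauss hk).integrableOn.const_mul _)
      hshift.integrableOn measurableSet_Ioi ?_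
    intro u hu
    rw [← Real.exp_add]
    apply Real.exp_le_exp.2
    have hu' : s ≤ u := (Set.mem_Ioi.1 hu).le
    nlinarith [mul_nonneg (mul_nonneg hk.le hs) (sub_nonneg.2 hu')]
  have trans : (∫ u in Set.Ioi s, Real.exp (-(k / 2) * (u - s) ^ 2))
      = ∫ x in Set.Ioi (0:ℝ), Real.exp (-(k / 2) * x ^ 2) := by
    have h1 : MeasurePreserving (fun x : ℝ => x + s) volume volume :=
      measurePreserving_add_right volume s
    have h2 : MeasurableEmbedding (fun x : ℝ => x + s) :=
      (MeasurableEquiv.addRight s).measurableEmbedding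
    have h3 := h1.setIntegral_preimage_emb h2
      (fun u => Real.exp (-(k / 2) * (u - s) ^ 2)) (Set.Ioi s)
    rw [← h3]
    have : (fun x : ℝ => x + s) ⁻¹' Set.Ioi s = Set.Ioi 0 := by ext x; simp
    rw [this]
    congr 1; ext x; congr 2; ring
  have gauss := integral_gaussian_Ioi (k / 2)
  rw [key]
  refine le_trans (le_trans mono (le_of_eq (trans.trans gauss))) ?_
  -- √(π/(k/2)) / 2 ≤ √(2/k)
  have h24 : Real.sqrt 4 = 2 := by
    rw [show (4:ℝ) = 2 ^ 2 by norm_num]; exact Real.sqrt_sq (by norm_num)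
  calc Real.sqrt (π / (k / 2)) / 2 = Real.sqrt (π / (k / 2)) / Real.sqrt 4 := by rw [h24]
    _ = Real.sqrt (π / (k / 2) / 4) := (Real.sqrt_div (by positivity) 4).symm
    _ ≤ Real.sqrt (2 / k) := by
        apply Real.sqrt_le_sqrt
        rw [div_div, div_le_div_iff₀ (by positivity) hk]
        nlinarith [Real.pi_le_four]

lemma gauss_tendsto {k : ℝ} (hk : 0 < k) :
    Tendsto (fun u : ℝ => -Real.exp (-(k / 2) * u ^ 2) / k) atTop (nhds 0) := by
  have ht : Tendsto (fun u : ℝ => -(k / 2) * u ^ 2) atTop atBot := by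
    apply Tendsto.const_mul_atTop_of_neg (by linarith : -(k / 2) < 0)
    exact tendsto_pow_atTop (by norm_num)
  have := ((Real.tendsto_exp_atBot.comp ht).div_const k).neg
  simpa [neg_div] using this

lemma gauss_deriv {k : ℝ} (hk : 0 < k) (x : ℝ) :
    HasDerivAt (fun u : ℝ => -Real.exp (-(k / 2) * u ^ 2) / k)
      (x * Real.exp (-(k / 2) * x ^ 2)) x := by
  have h1 : HasDerivAt (fun u : ℝ => -(k / 2) * u ^ 2) (-(k / 2) * (2 * x ^ 1)) x :=
    (hasDerivAt_pow 2 x).const_mul (-(k / 2))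
  have h3 := (h1.exp.div_const k).neg
  have hkne : k ≠ 0 := hk.ne'
  have heq : (fun u : ℝ => -Real.exp (-(k / 2) * u ^ 2) / k)
      = fun u : ℝ => -(Real.exp (-(k / 2) * u ^ 2) / k) := by
    funext u; rw [neg_div]
  rw [heq]
  refine h3.congr_deriv ?_
  rw [show -(Real.exp (-(k / 2) * x ^ 2) * (-(k / 2) * (2 * x ^ 1)) / k)
      = Real.exp (-(k / 2) * x ^ 2) * (k / 2 * (2 * x ^ 1)) / k by ring,
    pow_one, div_eq_iff hkne]
  ring

lemma L3 {k : ℝ} (hk : 0 < k) {s : ℝ} (hs : 0 < s) :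
    Gt k s ≤ Real.exp (-k * s ^ 2 / 2) / (k * s) := by
  have hderiv : ∀ x ∈ Set.Ici s, HasDerivAt (fun u : ℝ => -Real.exp (-(k / 2) * u ^ 2) / k)
      (x * Real.exp (-(k / 2) * x ^ 2)) x := fun x _ => gauss_deriv hk x
  have hpos : ∀ x ∈ Set.Ioi s, 0 ≤ x * Real.exp (-(k / 2) * x ^ 2) := fun x hx =>
    mul_nonneg (le_of_lt (lt_trans hs hx)) (Real.exp_pos _).le
  have hval := integral_Ioi_of_hasDerivAt_of_nonneg' hderiv hpos (gauss_tendsto hk)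
  have hWint : IntegrableOn (fun x : ℝ => x * Real.exp (-(k / 2) * x ^ 2)) (Set.Ioi s) :=
    integrableOn_Ioi_deriv_of_nonneg' hderiv hpos (gauss_tendsto hk)
  have mono : Gt k s ≤ ∫ u in Set.Ioi s, (1 / s) * (u * Real.exp (-(k / 2) * u ^ 2)) := by
    refine setIntegral_mono_on (int_gauss hk).integrableOn (hWint.const_mul _)
      measurableSet_Ioi ?_
    intro u hu
    have hsu : s ≤ u := (Set.mem_Ioi.1 hu).le
    have h1 : (1 : ℝ) ≤ u / s := (one_le_div hs).2 hsu
    have he : Real.exp (-k * u ^ 2 / 2) = Real.exp (-(k / 2) * u ^ 2) := by congr 1; ring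
    rw [he]
    calc Real.exp (-(k / 2) * u ^ 2) = 1 * Real.exp (-(k / 2) * u ^ 2) := by ring
      _ ≤ (u / s) * Real.exp (-(k / 2) * u ^ 2) :=
          mul_le_mul_of_nonneg_right h1 (Real.exp_pos _).le
      _ = (1 / s) * (u * Real.exp (-(k / 2) * u ^ 2)) := by ring
  rw [integral_const_mul, hval] at mono
  refine mono.trans (le_of_eq ?_)
  rw [show Real.exp (-k * s ^ 2 / 2) = Real.exp (-(k / 2) * s ^ 2) by congr 1; ring]
  field_simp
  ring

lemma hint_aux {c ε : ℝ} (hε : 0 < ε) (hεc : ε < c) {a b : ℝ} (ha : 0 ≤ a) (hab : a ≤ b) :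
    IntervalIntegrable (fun s => Real.exp (c * s ^ 2 / 2) * Gt (c - ε) s) volume a b := by
  have hk : 0 < c - ε := sub_pos.2 hεc
  have hc : 0 < c := hε.trans hεc
  rw [intervalIntegrable_iff_integrableOn_Ioc_of_le hab]
  apply Integrable.mono' (g := fun _ => Real.exp (c * b ^ 2 / 2) * Gt (c - ε) 0)
  · exact integrableOn_const measure_Ioc_lt_top.ne
  · exact ((Continuous.measurable (by fun_prop)).mul (Gt_meas hk)).aestronglyMeasurable
  · filter_upwards [ae_restrict_mem measurableSet_Ioc] with s hs
    have hs0 : 0 < s := lt_of_le_of_lt ha hs.1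
    have hnn : 0 ≤ Real.exp (c * s ^ 2 / 2) * Gt (c - ε) s :=
      mul_nonneg (Real.exp_pos _).le (Gt_nonneg _ _)
    rw [Real.norm_eq_abs, abs_of_nonneg hnn]
    refine mul_le_mul ?_ (Gt_anti hk hs0.le) (Gt_nonneg _ _) (Real.exp_pos _).le
    apply Real.exp_le_exp.2
    have hsb : s ^ 2 ≤ b ^ 2 := by nlinarith [hs.2, hs0]
    nlinarith [hsb, hc]

theorem stmt_6 (c ε : ℝ) (hε : 0 < ε) (hεc : ε < c) :
    (∀ r : ℝ, 0 < r → r ≤ 2 / Real.sqrt ε →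
      psi1 c ε r ≤ Real.sqrt (2 / (c - ε)) * Real.exp 2 * r) ∧
    (∀ r : ℝ, 2 / Real.sqrt ε < r →
      psi1 c ε r ≤ 2 * Real.sqrt 2 * Real.exp 2 / Real.sqrt (ε * (c - ε)) +
        2 * Real.exp (ε * r ^ 2 / 2) / (ε * (c - ε) * r ^ 2)) := by
  have hk : 0 < c - ε := sub_pos.2 hεc
  have hc : 0 < c := hε.trans hεc
  have hsε : 0 < Real.sqrt ε := Real.sqrt_pos.2 hε
  have hpsi : ∀ r, psi1 c ε r
      = ∫ s in (0:ℝ)..r, Real.exp (c * s ^ 2 / 2) * Gt (c - ε) s := fun r => rfl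
  have main1 : ∀ r : ℝ, 0 < r → r ≤ 2 / Real.sqrt ε →
      psi1 c ε r ≤ Real.sqrt (2 / (c - ε)) * Real.exp 2 * r := by
    intro r hr hrle
    have hr2 : r ^ 2 ≤ 4 / ε := by
      have h1 : r ^ 2 ≤ (2 / Real.sqrt ε) ^ 2 := by nlinarith
      calc r ^ 2 ≤ (2 / Real.sqrt ε) ^ 2 := h1
        _ = 4 / ε := by rw [div_pow, Real.sq_sqrt hε.le]; norm_num
    have pointwise : ∀ s ∈ Set.Icc (0:ℝ) r,
        Real.exp (c * s ^ 2 / 2) * Gt (c - ε) s ≤ Real.sqrt (2 / (c - ε)) * Real.exp 2 := by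
      intro s hs
      have h1 : Real.exp (c * s ^ 2 / 2)
          = Real.exp (ε * s ^ 2 / 2) * Real.exp ((c - ε) * s ^ 2 / 2) := by
        rw [← Real.exp_add]; congr 1; ring
      rw [h1, mul_assoc]
      have h2 := L2 hk hs.1
      have h3 : Real.exp (ε * s ^ 2 / 2) ≤ Real.exp 2 := by
        apply Real.exp_le_exp.2
        have hs2 : s ^ 2 ≤ r ^ 2 := by nlinarith [hs.1, hs.2]
        have : ε * s ^ 2 ≤ 4 := by
          calc ε * s ^ 2 ≤ ε * (4 / ε) := by nlinarith
            _ = 4 := by field_simp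
        linarith
      calc Real.exp (ε * s ^ 2 / 2) * (Real.exp ((c - ε) * s ^ 2 / 2) * Gt (c - ε) s)
          ≤ Real.exp 2 * Real.sqrt (2 / (c - ε)) :=
            mul_le_mul h3 h2 (mul_nonneg (Real.exp_pos _).le (Gt_nonneg _ _)) (Real.exp_pos _).le
        _ = Real.sqrt (2 / (c - ε)) * Real.exp 2 := mul_comm _ _
    rw [hpsi]
    calc (∫ s in (0:ℝ)..r, Real.exp (c * s ^ 2 / 2) * Gt (c - ε) s)
        ≤ ∫ _s in (0:ℝ)..r, Real.sqrt (2 / (c - ε)) * Real.exp 2 :=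
          intervalIntegral.integral_mono_on hr.le (hint_aux hε hεc le_rfl hr.le)
            intervalIntegrable_const pointwise
      _ = Real.sqrt (2 / (c - ε)) * Real.exp 2 * r := by
          rw [intervalIntegral.integral_const, sub_zero, smul_eq_mul, mul_comm]
  refine ⟨main1, ?_⟩
  intro r hr
  set r0 : ℝ := 2 / Real.sqrt ε with hr0def
  have hr0pos : 0 < r0 := div_pos two_pos hsε
  have hrpos : 0 < r := hr0pos.trans hr
  set F : ℝ → ℝ := fun s => 2 * Real.exp (ε * s ^ 2 / 2) / (ε * (c - ε) * s ^ 2) with hFdef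
  set F' : ℝ → ℝ :=
    fun s => 2 * Real.exp (ε * s ^ 2 / 2) * (ε * s ^ 2 - 2) / (ε * (c - ε) * s ^ 3) with hF'def
  set φ : ℝ → ℝ := fun s => Real.exp (ε * s ^ 2 / 2) / ((c - ε) * s) with hφdef
  have hs4 : ∀ s : ℝ, r0 ≤ s → 4 ≤ ε * s ^ 2 := by
    intro s hs
    rw [hr0def, div_le_iff₀ hsε] at hs
    nlinarith [Real.sq_sqrt hε.le, hs]
  have hsplit : psi1 c ε r = psi1 c ε r0
      + ∫ s in r0..r, Real.exp (c * s ^ 2 / 2) * Gt (c - ε) s := by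
    rw [hpsi r, hpsi r0,
      ← intervalIntegral.integral_add_adjacent_intervals
        (hint_aux hε hεc le_rfl hr0pos.le) (hint_aux hε hεc hr0pos.le hr.le)]
  have hb1 : psi1 c ε r0 ≤ 2 * Real.sqrt 2 * Real.exp 2 / Real.sqrt (ε * (c - ε)) := by
    refine (main1 r0 hr0pos le_rfl).trans (le_of_eq ?_)
    have hsk : 0 < Real.sqrt (c - ε) := Real.sqrt_pos.2 hk
    rw [hr0def, Real.sqrt_div (by norm_num : (0:ℝ) ≤ 2), Real.sqrt_mul hε.le]
    field_simp
  have hFderiv : ∀ x ∈ Set.uIcc r0 r, HasDerivAt F (F' x) x := by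
    intro x hx
    rw [Set.uIcc_of_le hr.le] at hx
    have hx0 : 0 < x := lt_of_lt_of_le hr0pos hx.1
    have hA : HasDerivAt (fun s : ℝ => ε * s ^ 2 / 2) (ε * x) x := by
      have := ((hasDerivAt_pow 2 x).const_mul ε).div_const 2
      refine this.congr_deriv ?_
      ring
    have hC : HasDerivAt (fun s : ℝ => 2 * Real.exp (ε * s ^ 2 / 2))
        (2 * (Real.exp (ε * x ^ 2 / 2) * (ε * x))) x := hA.exp.const_mul 2
    have hD : HasDerivAt (fun s : ℝ => ε * (c - ε) * s ^ 2) (ε * (c - ε) * (2 * x ^ 1)) x :=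
      (hasDerivAt_pow 2 x).const_mul (ε * (c - ε))
    have hne : ε * (c - ε) * x ^ 2 ≠ 0 := by positivity
    have hE := hC.div hD hne
    refine hE.congr_deriv ?_
    rw [hF'def]
    field_simp
  have hcontF' : ContinuousOn F' (Set.uIcc r0 r) := by
    rw [Set.uIcc_of_le hr.le]
    apply ContinuousOn.div (Continuous.continuousOn (by fun_prop))
      (Continuous.continuousOn (by fun_prop))
    intro x hx
    have hx0 : 0 < x := lt_of_lt_of_le hr0pos hx.1
    positivity
  have hF'int : IntervalIntegrable F' volume r0 r := hcontF'.intervalIntegrable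
  have hφint : IntervalIntegrable φ volume r0 r := by
    apply ContinuousOn.intervalIntegrable
    rw [Set.uIcc_of_le hr.le]
    apply ContinuousOn.div (Continuous.continuousOn (by fun_prop))
      (Continuous.continuousOn (by fun_prop))
    intro x hx
    have hx0 : 0 < x := lt_of_lt_of_le hr0pos hx.1
    positivity
  have hmono2 : (∫ s in r0..r, Real.exp (c * s ^ 2 / 2) * Gt (c - ε) s)
      ≤ ∫ s in r0..r, φ s := by
    refine intervalIntegral.integral_mono_on hr.le (hint_aux hε hεc hr0pos.le hr.le) hφint ?_
    intro s hs
    have hs0 : 0 < s := lt_of_lt_of_le hr0pos hs.1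
    calc Real.exp (c * s ^ 2 / 2) * Gt (c - ε) s
        ≤ Real.exp (c * s ^ 2 / 2) * (Real.exp (-(c - ε) * s ^ 2 / 2) / ((c - ε) * s)) :=
          mul_le_mul_of_nonneg_left (L3 hk hs0) (Real.exp_pos _).le
      _ = φ s := by
          rw [hφdef, mul_div_assoc', ← Real.exp_add]
          congr 2
          ring
  have hmono3 : (∫ s in r0..r, φ s) ≤ ∫ s in r0..r, F' s := by
    refine intervalIntegral.integral_mono_on hr.le hφint hF'int ?_
    intro s hs
    have hs0 : 0 < s := lt_of_lt_of_le hr0pos hs.1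
    have h4 := hs4 s hs.1
    rw [hφdef, hF'def]
    rw [div_le_div_iff₀ (by positivity) (by positivity)]
    have key : 0 ≤ Real.exp (ε * s ^ 2 / 2) * ((c - ε) * s) * (ε * s ^ 2 - 4) :=
      mul_nonneg (mul_nonneg (Real.exp_pos _).le (by positivity)) (by linarith)
    nlinarith [key]
  have hFTC : (∫ s in r0..r, F' s) = F r - F r0 :=
    intervalIntegral.integral_eq_sub_of_hasDerivAt hFderiv hF'int
  have hF0 : 0 ≤ F r0 := by rw [hFdef]; positivity
  have hb2 : (∫ s in r0..r, Real.exp (c * s ^ 2 / 2) * Gt (c - ε) s)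
      ≤ 2 * Real.exp (ε * r ^ 2 / 2) / (ε * (c - ε) * r ^ 2) := by
    calc (∫ s in r0..r, Real.exp (c * s ^ 2 / 2) * Gt (c - ε) s)
        ≤ ∫ s in r0..r, F' s := hmono2.trans hmono3
      _ = F r - F r0 := hFTC
      _ ≤ F r := by linarith
      _ = 2 * Real.exp (ε * r ^ 2 / 2) / (ε * (c - ε) * r ^ 2) := rfl
  rw [hsplit]
  exact add_le_add hb1 hb2
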